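/- Let G be a graph and M = M[IAS(G)]. Then: (1) if n ≤ 3 and G is connected, then κ(M) = n; (2) if G is disconnected, then κ(M) = 1; (3) if n ≥ 4, G is connected, and G is not prime, then κ(M) = 3. -/

import Mathlib

open scoped ENat

variable {V : Type*} [Fintype V] [DecidableEq V]

/-- The column of the matrix `IAS(G) = (I | A | A+I)` indexed by `(v, i)`:
`i = 0` gives `φ(v)` (identity column), `i = 1` gives `χ(v)` (column of `A`),
`i = 2` gives `ψ(v)` (column of `A + I`). -/
def iasCol (A : Matrix V V (ZMod 2)) : V × Fin 3 → V → ZMod 2 :=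
  fun p w =>
    if p.2 = 0 then (if w = p.1 then 1 else 0)
    else if p.2 = 1 then A w p.1
    else A w p.1 + (if w = p.1 then 1 else 0)

/-- The rank of a subset of the ground set `W(G) = V × Fin 3` of the isotropic
matroid: the GF(2)-rank of the corresponding set of columns. -/
noncomputable def iasRank (A : Matrix V V (ZMod 2)) (S : Set (V × Fin 3)) : ℕ :=
  Module.finrank (ZMod 2) (Submodule.span (ZMod 2) (iasCol A '' S))

/-- The connectivity function `λ(S) = r(S) + r(W - S) - r(M)`. -/
noncomputable def iasLambda (A : Matrix V V (ZMod 2)) (S : Set (V × Fin 3)) : ℕ :=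
  iasRank A S + iasRank A Sᶜ - iasRank A Set.univ

/-- Independence in the isotropic matroid. -/
def iasIndep (A : Matrix V V (ZMod 2)) (S : Set (V × Fin 3)) : Prop :=
  LinearIndependent (ZMod 2) (fun s : S => iasCol A s.1)

/-- Circuits of the isotropic matroid: minimal dependent sets. -/
def iasCircuit (A : Matrix V V (ZMod 2)) (C : Set (V × Fin 3)) : Prop :=
  ¬ iasIndep A C ∧ ∀ S ⊂ C, iasIndep A S

/-- An ordinary `k`-separation: `λ(S) < k` and `|S|, |W - S| ≥ k`. -/
def OrdinarySep (A : Matrix V V (ZMod 2)) (k : ℕ) (S : Set (V × Fin 3)) : Prop :=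
  0 < k ∧ iasLambda A S < k ∧ k ≤ S.ncard ∧ k ≤ Sᶜ.ncard

/-- A cyclic `k`-separation: `λ(S) < k` and both `S` and `W - S` are dependent. -/
def CyclicSep (A : Matrix V V (ZMod 2)) (k : ℕ) (S : Set (V × Fin 3)) : Prop :=
  0 < k ∧ iasLambda A S < k ∧ ¬ iasIndep A S ∧ ¬ iasIndep A Sᶜ

/-- A vertical `k`-separation: `λ(S) < k` and `r(S), r(W - S) ≥ k`. -/
def VerticalSep (A : Matrix V V (ZMod 2)) (k : ℕ) (S : Set (V × Fin 3)) : Prop :=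
  0 < k ∧ iasLambda A S < k ∧ k ≤ iasRank A S ∧ k ≤ iasRank A Sᶜ

/-- `τ(M) = min {k : M has an ordinary k-separation}`, with `min ∅ = ∞`. -/
noncomputable def iasTau (A : Matrix V V (ZMod 2)) : ℕ∞ :=
  sInf {k : ℕ∞ | ∃ m : ℕ, (m : ℕ∞) = k ∧ ∃ S, OrdinarySep A m S}

/-- `κ*(M) = min ({k : M has a cyclic k-separation} ∪ {|W| - r(M)})`. -/
noncomputable def iasKappaStar (A : Matrix V V (ZMod 2)) : ℕ :=
  sInf ({k : ℕ | ∃ S, CyclicSep A k S} ∪ {3 * Fintype.card V - iasRank A Set.univ})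

/-- `κ(M) = min ({k : M has a vertical k-separation} ∪ {r(M)})`. -/
noncomputable def iasKappa (A : Matrix V V (ZMod 2)) : ℕ :=
  sInf ({k : ℕ | ∃ S, VerticalSep A k S} ∪ {iasRank A Set.univ})

/-- The simple graph underlying a looped simple graph given by its adjacency matrix. -/
def toSimpleGraph (A : Matrix V V (ZMod 2)) : SimpleGraph V where
  Adj v w := v ≠ w ∧ A v w = 1 ∧ A w v = 1
  symm := ⟨fun v w ⟨h1, h2, h3⟩ => ⟨Ne.symm h1, h3, h2⟩⟩
  loopless := ⟨fun v h => h.1 rfl⟩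

/-- The open neighborhood `N_G(v)`. -/
def nbhd (A : Matrix V V (ZMod 2)) (v : V) : Set V := {u | u ≠ v ∧ A v u = 1}

/-- `v` is a pendant vertex: `N_G(v) = {w}` for some `w`. -/
def IsPendant (A : Matrix V V (ZMod 2)) (v : V) : Prop := ∃ w, nbhd A v = {w}

/-- `G` has a pair of twin vertices: `v ≠ w` with `N_G(v) - {w} = N_G(w) - {v}`. -/
def HasTwins (A : Matrix V V (ZMod 2)) : Prop :=
  ∃ v w, v ≠ w ∧ nbhd A v \ {w} = nbhd A w \ {v}

/-- The cut-rank `c_G(X)`: the GF(2)-rank of the submatrix `A[V - X, X]`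
(columns indexed by `X`, rows indexed by `V - X`). -/
noncomputable def cutRank (A : Matrix V V (ZMod 2)) (X : Set V) : ℕ :=
  Module.finrank (ZMod 2)
    (Submodule.span (ZMod 2) ((fun x : V => fun w : ↥(Xᶜ) => A w.1 x) '' X))

/-- `τ_G(X) = ⋃_{x ∈ X} τ_G(x)`, the union of the vertex triples of members of `X`. -/
def tauSet (X : Set V) : Set (V × Fin 3) := {p | p.1 ∈ X}

/-- Loop complementation at `v`. -/
def loopComp (A : Matrix V V (ZMod 2)) (v : V) : Matrix V V (ZMod 2) :=
  fun x y => A x y + if x = v ∧ y = v then 1 else 0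

/-- Simple local complementation at `v`. -/
def simpleLocalComp (A : Matrix V V (ZMod 2)) (v : V) : Matrix V V (ZMod 2) :=
  fun x y => A x y +
    if x ≠ y ∧ (x ≠ v ∧ A v x = 1) ∧ (y ≠ v ∧ A v y = 1) then 1 else 0

/-- Non-simple local complementation at `v`. -/
def nonSimpleLocalComp (A : Matrix V V (ZMod 2)) (v : V) : Matrix V V (ZMod 2) :=
  fun x y => simpleLocalComp A v x y + if x = y ∧ x ≠ v ∧ A v x = 1 then 1 else 0

/-- One local move. -/
def LocalStep (A B : Matrix V V (ZMod 2)) : Prop :=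
  ∃ v, B = loopComp A v ∨ B = simpleLocalComp A v ∨ B = nonSimpleLocalComp A v

/-- Local equivalence: a finite sequence of loop complementations and
(simple or non-simple) local complementations. -/
def LocallyEquiv (A B : Matrix V V (ZMod 2)) : Prop :=
  Relation.ReflTransGen LocalStep A B

/-- `G` has a split: a bipartition `(V₁, V₂)` of `V` with `|V₁|, |V₂| ≥ 2` such that the
GF(2)-rank of `A[V₁, V₂]` is at most 1. -/
def HasSplit (A : Matrix V V (ZMod 2)) : Prop :=
  ∃ X : Set V, 2 ≤ X.ncard ∧ 2 ≤ Xᶜ.ncard ∧ cutRank A X ≤ 1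

/-- A transverse circuit: a circuit of the isotropic matroid meeting each
vertex triple at most once. -/
def IsTransverseCircuit (A : Matrix V V (ZMod 2)) (C : Set (V × Fin 3)) : Prop :=
  iasCircuit A C ∧ ∀ p ∈ C, ∀ q ∈ C, p.1 = q.1 → p = q

/-- An isotropic `k`-separation of `G`: `|X|, |V - X| ≥ k` and `c_G(X) < k`. -/
def IsotropicSep (A : Matrix V V (ZMod 2)) (k : ℕ) (X : Set V) : Prop :=
  k ≤ X.ncard ∧ k ≤ Xᶜ.ncard ∧ cutRank A X < k

/-- The isotropic connectivity `κ_B(G)`, with `min ∅ = ∞`. -/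
noncomputable def kappaB (A : Matrix V V (ZMod 2)) : ℕ∞ :=
  sInf {j : ℕ∞ | ∃ k : ℕ, (k : ℕ∞) = j ∧ ∃ X, IsotropicSep A k X}

/-- The 5-cycle `C₅`. -/
def C5mat : Matrix (Fin 5) (Fin 5) (ZMod 2) :=
  fun i j => if (i.val + 1) % 5 = j.val ∨ (j.val + 1) % 5 = i.val then 1 else 0

/-- The wheel `W₅` : a 5-cycle on `{0,…,4}` plus a hub `5` adjacent to all. -/
def W5mat : Matrix (Fin 6) (Fin 6) (ZMod 2) :=
  fun i j =>
    if (i.val = 5 ∧ j.val ≠ 5) ∨ (j.val = 5 ∧ i.val ≠ 5) then 1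
    else if i.val ≠ 5 ∧ j.val ≠ 5 ∧ ((i.val + 1) % 5 = j.val ∨ (j.val + 1) % 5 = i.val) then 1
    else 0

section IASAux

open Submodule Module LinearMap

variable {V : Type*} [Fintype V] [DecidableEq V]

private noncomputable def resMap (X : Set V) : (V → ZMod 2) →ₗ[ZMod 2] (↥Xᶜ → ZMod 2) :=
  LinearMap.funLeft (ZMod 2) (ZMod 2) Subtype.val

private def esingle (v : V) : V → ZMod 2 := fun w => if w = v then 1 else 0

private lemma esingle_eq_single (v : V) : esingle v = Pi.single v 1 := by
  funext w; simp [esingle, Pi.single_apply]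

omit [DecidableEq V] in
private lemma finrank_ker_resMap (X : Set V) :
    finrank (ZMod 2) ↥(LinearMap.ker (resMap X)) = X.ncard := by
  letI : Fintype ↥X := Fintype.ofFinite _
  letI : Fintype ↥Xᶜ := Fintype.ofFinite _
  have hsurj : Function.Surjective (resMap X) :=
    LinearMap.funLeft_surjective_of_injective _ _ _ Subtype.val_injective
  have h := (resMap X).finrank_range_add_finrank_ker
  rw [LinearMap.range_eq_top.2 hsurj, finrank_top] at h
  have h1 : finrank (ZMod 2) (↥Xᶜ → ZMod 2) = Fintype.card ↥Xᶜ := Module.finrank_pi (ZMod 2)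
  have h2 : finrank (ZMod 2) (V → ZMod 2) = Fintype.card V := Module.finrank_pi (ZMod 2)
  have h3 : Fintype.card ↥Xᶜ = Fintype.card V - Fintype.card ↥X := Fintype.card_compl_set X
  have h4 : Fintype.card ↥X ≤ Fintype.card V := Fintype.card_le_of_injective _ Subtype.val_injective
  have h5 : X.ncard = Fintype.card ↥X := by
    rw [← Nat.card_coe_set_eq, Nat.card_eq_fintype_card]
  omega

private lemma finrank_eq_map_add_inf_ker {M N : Type*} [AddCommGroup M] [Module (ZMod 2) M]
    [AddCommGroup N] [Module (ZMod 2) N] [FiniteDimensional (ZMod 2) M]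
    (U : Submodule (ZMod 2) M) (π : M →ₗ[ZMod 2] N) :
    finrank (ZMod 2) ↥U
      = finrank (ZMod 2) ↥(U.map π) + finrank (ZMod 2) ↥(U ⊓ LinearMap.ker π) := by
  have h := (π.domRestrict U).finrank_range_add_finrank_ker
  rw [LinearMap.range_domRestrict] at h
  have e1 : LinearMap.ker (π.domRestrict U) = comap U.subtype (U ⊓ LinearMap.ker π) := by
    ext x
    simp [LinearMap.ker_domRestrict]
  have e : ↥(LinearMap.ker (π.domRestrict U)) ≃ₗ[ZMod 2] ↥(U ⊓ LinearMap.ker π) := by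
    rw [e1]
    exact Submodule.comapSubtypeEquivOfLe inf_le_left
  rw [e.finrank_eq] at h
  omega

private lemma li_esingle (X : Set V) :
    LinearIndependent (ZMod 2) (fun v : ↥X => esingle (v : V)) := by
  have h2 := (Pi.basisFun (ZMod 2) V).linearIndependent.comp
    (Subtype.val : ↥X → V) Subtype.val_injective
  convert h2 using 2 with v
  rw [esingle_eq_single]
  simp [Pi.basisFun_apply]

private lemma finrank_span_esingle (X : Set V) :
    finrank (ZMod 2) ↥(span (ZMod 2) (esingle '' X)) = X.ncard := by
  letI : Fintype ↥X := Fintype.ofFinite _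
  rw [Set.image_eq_range, finrank_span_eq_card (li_esingle X),
    ← Nat.card_coe_set_eq, Nat.card_eq_fintype_card]

private lemma rank_upper (A : Matrix V V (ZMod 2)) (X : Set V)
    (U : Submodule (ZMod 2) (V → ZMod 2))
    (h : U.map (resMap X) ≤ span (ZMod 2) ((fun x : V => fun w : ↥(Xᶜ) => A w.1 x) '' X)) :
    finrank (ZMod 2) ↥U ≤ X.ncard + cutRank A X := by
  rw [finrank_eq_map_add_inf_ker U (resMap X)]
  have h1 : finrank (ZMod 2) ↥(U ⊓ LinearMap.ker (resMap X)) ≤ X.ncard := by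
    rw [← finrank_ker_resMap X]
    exact Submodule.finrank_mono inf_le_right
  have h2 : finrank (ZMod 2) ↥(U.map (resMap X)) ≤ cutRank A X := Submodule.finrank_mono h
  omega

private lemma rank_lower (A : Matrix V V (ZMod 2)) (X : Set V)
    (U : Submodule (ZMod 2) (V → ZMod 2))
    (h1 : ∀ v ∈ X, esingle v ∈ U)
    (h2 : ∀ v ∈ X, (fun w => A w v) ∈ U) :
    X.ncard + cutRank A X ≤ finrank (ZMod 2) ↥U := by
  rw [finrank_eq_map_add_inf_ker U (resMap X)]
  have hb : cutRank A X ≤ finrank (ZMod 2) ↥(U.map (resMap X)) := by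
    apply Submodule.finrank_mono
    rw [Submodule.span_le]
    rintro - ⟨x, hx, rfl⟩
    exact ⟨_, h2 x hx, rfl⟩
  have ha : X.ncard ≤ finrank (ZMod 2) ↥(U ⊓ LinearMap.ker (resMap X)) := by
    rw [← finrank_span_esingle X]
    apply Submodule.finrank_mono
    rw [Submodule.span_le]
    rintro - ⟨v, hv, rfl⟩
    refine ⟨h1 v hv, ?_⟩
    show esingle v ∈ LinearMap.ker (resMap X)
    rw [LinearMap.mem_ker]
    funext w
    have hne : (w : V) ≠ v := fun hh => w.2 (hh ▸ hv)
    simp [resMap, esingle, LinearMap.funLeft, hne]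
  omega

omit [DecidableEq V] in
private lemma finrank_span_image_cols {m : Type*} [Fintype m] (g : V → (m → ZMod 2)) (X : Set V)
    [Fintype ↥X] :
    finrank (ZMod 2) ↥(span (ZMod 2) (g '' X))
      = (Matrix.of fun (w : m) (x : ↥X) => g x.1 w).rank := by
  rw [Matrix.rank_eq_finrank_span_cols]
  have h : g '' X = Set.range (Matrix.of fun (w : m) (x : ↥X) => g x.1 w).transpose := by
    rw [Set.image_eq_range]; rfl
  rw [h]; rfl

omit [DecidableEq V] in
private lemma cutRank_compl_eq (A : Matrix V V (ZMod 2)) (hA : A.IsSymm) (X : Set V) :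
    cutRank A Xᶜ = cutRank A X := by
  letI : Fintype ↥X := Fintype.ofFinite _
  letI : Fintype ↥Xᶜ := Fintype.ofFinite _
  letI : Fintype ↥Xᶜᶜ := Fintype.ofFinite _
  unfold cutRank
  set e : ↥X ≃ ↥Xᶜᶜ := Equiv.setCongr (compl_compl X).symm with he
  set L : (↥Xᶜᶜ → ZMod 2) ≃ₗ[ZMod 2] (↥X → ZMod 2) :=
    LinearEquiv.funCongrLeft (ZMod 2) (ZMod 2) e with hL
  have hLg : ∀ y : V,
      (⇑(L : (↥Xᶜᶜ → ZMod 2) →ₗ[ZMod 2] (↥X → ZMod 2))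
        ∘ (fun x : V => fun w : ↥(Xᶜᶜ) => A w.1 x)) y
      = (fun x : V => fun w : ↥X => A w.1 x) y := by
    intro y
    funext w
    simp only [hL, he, Function.comp_apply, LinearEquiv.funCongrLeft,
      LinearEquiv.coe_coe, LinearEquiv.ofLinear_apply, LinearMap.funLeft_apply,
      Equiv.setCongr_apply]
  have hmap : (span (ZMod 2) ((fun x : V => fun w : ↥(Xᶜᶜ) => A w.1 x) '' Xᶜ)).map
        (L : (↥Xᶜᶜ → ZMod 2) →ₗ[ZMod 2] (↥X → ZMod 2))
      = span (ZMod 2) ((fun x : V => fun w : ↥X => A w.1 x) '' Xᶜ) := by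
    rw [Submodule.map_span, ← Set.image_comp]
    exact congrArg (span (ZMod 2)) (Set.image_congr' hLg)
  have h1 : finrank (ZMod 2) ↥(span (ZMod 2) ((fun x : V => fun w : ↥(Xᶜᶜ) => A w.1 x) '' Xᶜ))
      = finrank (ZMod 2) ↥(span (ZMod 2) ((fun x : V => fun w : ↥X => A w.1 x) '' Xᶜ)) := by
    rw [← hmap, LinearEquiv.finrank_map_eq]
  rw [h1, finrank_span_image_cols, finrank_span_image_cols]
  have h2 : (Matrix.of fun (w : ↥X) (x : ↥Xᶜ) => A w.1 x.1)
      = (Matrix.of fun (w : ↥Xᶜ) (x : ↥X) => A w.1 x.1).transpose := by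
    ext i j
    simp only [Matrix.of_apply, Matrix.transpose_apply]
    exact (hA.apply i.1 j.1).symm
  show (Matrix.of fun (w : ↥X) (x : ↥Xᶜ) => A w.1 x.1).rank
      = (Matrix.of fun (w : ↥Xᶜ) (x : ↥X) => A w.1 x.1).rank
  rw [h2, Matrix.rank_transpose]

omit [DecidableEq V] in
private lemma one_le_cutRank (A : Matrix V V (ZMod 2)) {X : Set V} {v w : V}
    (hv : v ∈ X) (hw : w ∈ Xᶜ) (hvw : A w v = 1) : 1 ≤ cutRank A X := by
  rw [Nat.one_le_iff_ne_zero]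
  intro h0
  have hbot : (span (ZMod 2) ((fun x : V => fun u : ↥(Xᶜ) => A u.1 x) '' X)) = ⊥ :=
    Submodule.finrank_eq_zero.mp h0
  have hmem : (fun u : ↥Xᶜ => A u.1 v)
      ∈ span (ZMod 2) ((fun x : V => fun u : ↥(Xᶜ) => A u.1 x) '' X) :=
    Submodule.subset_span ⟨v, hv, rfl⟩
  rw [hbot, Submodule.mem_bot] at hmem
  have := congrFun hmem ⟨w, hw⟩
  rw [hvw] at this
  exact one_ne_zero this

omit [DecidableEq V] in
private lemma cutRank_zero_of_no_edge (A : Matrix V V (ZMod 2)) {X : Set V}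
    (h : ∀ v ∈ X, ∀ w ∈ Xᶜ, A w v = 0) : cutRank A X = 0 := by
  have hsp : span (ZMod 2) ((fun x : V => fun w : ↥(Xᶜ) => A w.1 x) '' X) = ⊥ := by
    rw [Submodule.span_eq_bot]
    rintro - ⟨x, hx, rfl⟩
    funext w
    exact h x hx w.1 w.2
  unfold cutRank
  rw [hsp, finrank_bot]

omit [Fintype V] [DecidableEq V] in
private lemma walk_cross {G : SimpleGraph V} {X : Set V} {v w : V} (p : G.Walk v w)
    (hv : v ∈ X) (hw : w ∉ X) : ∃ a b, a ∈ X ∧ b ∉ X ∧ G.Adj a b := by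
  induction p with
  | nil => exact absurd hv hw
  | @cons u c w' h q ih =>
    by_cases hc : c ∈ X
    · exact ih hc hw
    · exact ⟨u, c, hv, hc, h⟩

private lemma iasCol_zero (A : Matrix V V (ZMod 2)) (v : V) :
    iasCol A (v, 0) = esingle v := by
  funext w; simp [iasCol, esingle]

private lemma iasCol_one (A : Matrix V V (ZMod 2)) (v : V) :
    iasCol A (v, 1) = fun w => A w v := by
  funext w; simp [iasCol]

private lemma iasCol_two (A : Matrix V V (ZMod 2)) (v : V) :
    iasCol A (v, 2) = (fun w => A w v) + esingle v := by
  funext w; simp [iasCol, esingle]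

private lemma zmod2_add_self (x : ZMod 2) : x + x = 0 := by
  have h : (2 : ZMod 2) = 0 := rfl
  calc x + x = 2 * x := by ring
  _ = 0 := by rw [h]; ring

private lemma aAdd (A : Matrix V V (ZMod 2)) (v : V) :
    (fun w => A w v) = iasCol A (v, 2) + iasCol A (v, 0) := by
  rw [iasCol_two, iasCol_zero]
  funext w
  simp only [Pi.add_apply]
  rw [add_assoc, zmod2_add_self, add_zero]

private lemma eAdd (A : Matrix V V (ZMod 2)) (v : V) :
    esingle v = iasCol A (v, 1) + iasCol A (v, 2) := by
  rw [iasCol_one, iasCol_two]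
  funext w
  simp only [Pi.add_apply]
  rw [← add_assoc, zmod2_add_self, zero_add]

private lemma span_top_of_esingle (U : Submodule (ZMod 2) (V → ZMod 2))
    (h : ∀ v, esingle v ∈ U) : U = ⊤ := by
  rw [eq_top_iff, ← (Pi.basisFun (ZMod 2) V).span_eq]
  apply Submodule.span_le.2
  rintro - ⟨v, rfl⟩
  have := h v
  rw [esingle_eq_single] at this
  simpa [Pi.basisFun_apply] using this

private lemma iasRank_univ (A : Matrix V V (ZMod 2)) :
    iasRank A Set.univ = Fintype.card V := by
  have htop : span (ZMod 2) (iasCol A '' Set.univ) = ⊤ := by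
    apply span_top_of_esingle
    intro v
    exact Submodule.subset_span ⟨(v, 0), trivial, iasCol_zero A v⟩
  rw [iasRank, htop, finrank_top, Module.finrank_pi]

private lemma mem_of_two (A : Matrix V V (ZMod 2)) (T : Set (V × Fin 3)) (v : V)
    (h : ((v, 0) ∈ T ∧ (v, 1) ∈ T) ∨ ((v, 0) ∈ T ∧ (v, 2) ∈ T) ∨ ((v, 1) ∈ T ∧ (v, 2) ∈ T)) :
    esingle v ∈ span (ZMod 2) (iasCol A '' T)
      ∧ (fun w => A w v) ∈ span (ZMod 2) (iasCol A '' T) := by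
  have m : ∀ i : Fin 3, (v, i) ∈ T → iasCol A (v, i) ∈ span (ZMod 2) (iasCol A '' T) :=
    fun i hi => Submodule.subset_span ⟨(v, i), hi, rfl⟩
  rcases h with ⟨h0, h1⟩ | ⟨h0, h2⟩ | ⟨h1, h2⟩
  · exact ⟨iasCol_zero A v ▸ m 0 h0, iasCol_one A v ▸ m 1 h1⟩
  · refine ⟨iasCol_zero A v ▸ m 0 h0, ?_⟩
    rw [aAdd A v]
    exact Submodule.add_mem _ (m 2 h2) (m 0 h0)
  · refine ⟨?_, iasCol_one A v ▸ m 1 h1⟩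
    rw [eAdd A v]
    exact Submodule.add_mem _ (m 1 h1) (m 2 h2)

private lemma two_le_finrank_of (D : Submodule (ZMod 2) (V → ZMod 2)) (v u : V)
    (f : V → ZMod 2) (hu : u ≠ v) (hD1 : esingle v ∈ D) (hD2 : f ∈ D) (hf : f u = 1) :
    2 ≤ finrank (ZMod 2) ↥D := by
  have hli : LinearIndependent (ZMod 2) ![f, esingle v] := by
    rw [linearIndependent_fin2]
    refine ⟨?_, ?_⟩
    · intro h0
      have h := congrFun h0 v
      simp only [Matrix.cons_val_one, Matrix.head_cons, Matrix.cons_val_zero, esingle, Pi.zero_apply,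
        if_pos rfl] at h
      exact one_ne_zero h
    · intro a ha
      have h := congrFun ha u
      simp only [Matrix.cons_val_one, Matrix.head_cons, Matrix.cons_val_zero, Pi.smul_apply,
        esingle, if_neg hu, smul_zero] at h
      rw [hf] at h
      exact zero_ne_one h
  have hsub : span (ZMod 2) (Set.range ![f, esingle v]) ≤ D := by
    rw [Submodule.span_le]
    rintro - ⟨i, rfl⟩
    fin_cases i
    · exact hD2
    · exact hD1
  have := Submodule.finrank_mono hsub
  rwa [finrank_span_eq_card hli, Fintype.card_fin] at this

private lemma tauSet_compl (X : Set V) : (tauSet X)ᶜ = tauSet Xᶜ := rfl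

private lemma iasRank_tauSet (A : Matrix V V (ZMod 2)) (X : Set V) :
    iasRank A (tauSet X) = X.ncard + cutRank A X := by
  set U := span (ZMod 2) (iasCol A '' tauSet X) with hU
  apply le_antisymm
  · apply rank_upper A X U
    rw [hU, Submodule.map_span, ← Set.image_comp, Submodule.span_le]
    rintro - ⟨⟨v, i⟩, hv, rfl⟩
    have hv' : v ∈ X := hv
    have h0 : resMap X (iasCol A (v, 0)) = 0 := by
      funext w
      have hne : (w : V) ≠ v := fun hh => w.2 (hh ▸ hv')
      simp [resMap, iasCol_zero, esingle, LinearMap.funLeft, hne]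
    have h1 : resMap X (iasCol A (v, 1)) = fun w : ↥Xᶜ => A w.1 v := by
      funext w
      simp [resMap, iasCol_one, LinearMap.funLeft]
    have h2 : resMap X (iasCol A (v, 2)) = fun w : ↥Xᶜ => A w.1 v := by
      funext w
      have hne : (w : V) ≠ v := fun hh => w.2 (hh ▸ hv')
      simp [resMap, iasCol_two, esingle, LinearMap.funLeft, hne]
    have hgen : (fun w : ↥Xᶜ => A w.1 v)
        ∈ span (ZMod 2) ((fun x : V => fun w : ↥(Xᶜ) => A w.1 x) '' X) :=
      Submodule.subset_span ⟨v, hv', rfl⟩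
    fin_cases i
    · show resMap X (iasCol A (v, 0)) ∈ _
      rw [h0]
      exact Submodule.zero_mem _
    · show resMap X (iasCol A (v, 1)) ∈ _
      rw [h1]
      exact hgen
    · show resMap X (iasCol A (v, 2)) ∈ _
      rw [h2]
      exact hgen
  · apply rank_lower A X U
    · intro v hv
      exact iasCol_zero A v ▸ Submodule.subset_span ⟨(v, 0), hv, rfl⟩
    · intro v hv
      exact iasCol_one A v ▸ Submodule.subset_span ⟨(v, 1), hv, rfl⟩

private lemma exists_neighbor (A : Matrix V V (ZMod 2)) (hA : A.IsSymm)
    (hconn : (toSimpleGraph A).Connected) (hcard : 2 ≤ Fintype.card V) (v : V) :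
    ∃ u, u ≠ v ∧ A u v = 1 := by
  obtain ⟨u, hu⟩ := Fintype.exists_ne_of_one_lt_card (by omega) v
  obtain ⟨p⟩ := hconn.preconnected v u
  cases p with
  | nil => exact absurd rfl hu
  | @cons _ c _ h q =>
    exact ⟨c, fun hh => h.1 hh.symm, h.2.2⟩

private lemma no_small_sep (A : Matrix V V (ZMod 2)) (hA : A.IsSymm)
    (hconn : (toSimpleGraph A).Connected) {k : ℕ} (hk : k ≤ 2) (S : Set (V × Fin 3)) :
    ¬ VerticalSep A k S := by
  rintro ⟨hk0, hlam, hrs, hrsc⟩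
  set U := span (ZMod 2) (iasCol A '' S) with hU
  set W := span (ZMod 2) (iasCol A '' Sᶜ) with hW
  have hrsU : iasRank A S = finrank (ZMod 2) ↥U := rfl
  have hrsW : iasRank A Sᶜ = finrank (ZMod 2) ↥W := rfl
  have hsup : U ⊔ W = ⊤ := by
    rw [hU, hW, ← Submodule.span_union, ← Set.image_union, Set.union_compl_self]
    apply span_top_of_esingle
    intro v
    exact Submodule.subset_span ⟨(v, 0), trivial, iasCol_zero A v⟩
  have hid := Submodule.finrank_sup_add_finrank_inf_eq U W
  rw [hsup, finrank_top, Module.finrank_pi] at hid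
  set d := finrank (ZMod 2) ↥(U ⊓ W) with hd
  set n := Fintype.card V with hn
  have hdk : d < k := by
    have h1 : iasLambda A S < k := hlam
    rw [iasLambda, iasRank_univ, hrsU, hrsW] at h1
    omega
  have hcard2 : 2 ≤ n := by
    rw [hrsU] at hrs; rw [hrsW] at hrsc
    omega
  -- each vertex is assigned to one side
  have hside : ∀ v : V, (esingle v ∈ U ∧ (fun w => A w v) ∈ U)
      ∨ (esingle v ∈ W ∧ (fun w => A w v) ∈ W) := by
    intro v
    by_cases h0 : (v, 0) ∈ S <;> by_cases h1 : (v, 1) ∈ S <;> by_cases h2 : (v, 2) ∈ S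
    · exact Or.inl (mem_of_two A S v (Or.inl ⟨h0, h1⟩))
    · exact Or.inl (mem_of_two A S v (Or.inl ⟨h0, h1⟩))
    · exact Or.inl (mem_of_two A S v (Or.inr (Or.inl ⟨h0, h2⟩)))
    · exact Or.inr (mem_of_two A Sᶜ v (Or.inr (Or.inr ⟨h1, h2⟩)))
    · exact Or.inl (mem_of_two A S v (Or.inr (Or.inr ⟨h1, h2⟩)))
    · exact Or.inr (mem_of_two A Sᶜ v (Or.inr (Or.inl ⟨h0, h2⟩)))
    · exact Or.inr (mem_of_two A Sᶜ v (Or.inl ⟨h0, h1⟩))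
    · exact Or.inr (mem_of_two A Sᶜ v (Or.inl ⟨h0, h1⟩))
  set X := {v | esingle v ∈ U ∧ (fun w => A w v) ∈ U} with hX
  have hXc : ∀ v ∈ Xᶜ, esingle v ∈ W ∧ (fun w => A w v) ∈ W := by
    intro v hv
    rcases hside v with h | h
    · exact absurd h hv
    · exact h
  -- X is proper and nonempty
  have hXne : X.Nonempty := by
    by_contra hemp
    rw [Set.not_nonempty_iff_eq_empty] at hemp
    have hWtop : W = ⊤ := by
      apply span_top_of_esingle
      intro v
      exact (hXc v (by rw [hemp]; exact Set.notMem_empty v)).1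
    have : U ⊓ W = U := by rw [hWtop, inf_top_eq]
    rw [this] at hd
    rw [hrsU] at hrs
    omega
  have hXcne : Xᶜ.Nonempty := by
    by_contra hemp
    rw [Set.not_nonempty_iff_eq_empty, ← Set.compl_univ, compl_inj_iff] at hemp
    have hUtop : U = ⊤ := by
      apply span_top_of_esingle
      intro v
      exact ((hemp ▸ Set.mem_univ v : v ∈ X)).1
    have : U ⊓ W = W := by rw [hUtop, top_inf_eq]
    rw [this] at hd
    rw [hrsW] at hrsc
    omega
  -- crossing edge
  obtain ⟨v0, hv0⟩ := hXne
  obtain ⟨w0, hw0⟩ := hXcne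
  obtain ⟨p⟩ := hconn.preconnected v0 w0
  obtain ⟨a, b, ha, hb, hab⟩ := walk_cross p hv0 hw0
  have hba : A b a = 1 := hab.2.2
  have hab1 : A a b = 1 := hab.2.1
  have hc1 : 1 ≤ cutRank A X := one_le_cutRank A ha hb hba
  have hc2 : 1 ≤ cutRank A Xᶜ :=
    one_le_cutRank A hb (by simp only [compl_compl]; exact ha) hab1
  have hlow1 : X.ncard + cutRank A X ≤ finrank (ZMod 2) ↥U :=
    rank_lower A X U (fun v hv => hv.1) (fun v hv => hv.2)
  have hlow2 : Xᶜ.ncard + cutRank A Xᶜ ≤ finrank (ZMod 2) ↥W :=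
    rank_lower A Xᶜ W (fun v hv => (hXc v hv).1) (fun v hv => (hXc v hv).2)
  have hcount : X.ncard + Xᶜ.ncard = n := by
    rw [Set.ncard_add_ncard_compl, Nat.card_eq_fintype_card]
  omega

end IASAux

theorem stmt8 (A : Matrix V V (ZMod 2)) (hA : A.IsSymm) :
    (Fintype.card V ≤ 3 ∧ (toSimpleGraph A).Connected →
      iasKappa A = Fintype.card V) ∧
    (¬ (toSimpleGraph A).Preconnected → iasKappa A = 1) ∧
    (4 ≤ Fintype.card V ∧ (toSimpleGraph A).Connected ∧ HasSplit A →
      iasKappa A = 3) := by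
  classical
  have h01 : ∀ x : ZMod 2, x = 0 ∨ x = 1 := by decide
  refine ⟨?_, ?_, ?_⟩
  · -- Part 1 : n ≤ 3 and connected
    rintro ⟨hcard, hconn⟩
    unfold iasKappa
    apply le_antisymm
    · exact Nat.sInf_le (Or.inr (iasRank_univ A).symm)
    · apply le_csInf ⟨iasRank A Set.univ, Or.inr rfl⟩
      rintro j (⟨S, hS⟩ | hj)
      · rcases le_or_gt j 2 with h | h
        · exact absurd hS (no_small_sep A hA hconn h S)
        · omega
      · rw [Set.mem_singleton_iff] at hj
        rw [hj, iasRank_univ]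
  · -- Part 2 : disconnected
    intro hnp
    have hne : Nonempty V := by
      by_contra h
      exact hnp fun u v => (h ⟨u⟩).elim
    obtain ⟨u, w, hr⟩ : ∃ u w, ¬ (toSimpleGraph A).Reachable u w := by
      by_contra h
      push_neg at h
      exact hnp h
    set X := {x | (toSimpleGraph A).Reachable u x} with hXdef
    have hu : u ∈ X := SimpleGraph.Reachable.refl u
    have hw : w ∉ X := hr
    have hnoedge : ∀ v ∈ X, ∀ b ∈ Xᶜ, A b v = 0 := by
      intro v hv b hb
      rcases h01 (A b v) with h | h
      · exact h
      · exfalso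
        have hvb : v ≠ b := fun hh => hb (hh ▸ hv)
        have hvb1 : A v b = 1 := by rw [← hA.apply]; exact h
        have hadj : (toSimpleGraph A).Adj v b := ⟨hvb, hvb1, h⟩
        exact hb (hv.trans hadj.reachable)
    have hc1 : cutRank A X = 0 := cutRank_zero_of_no_edge A hnoedge
    have hc2 : cutRank A Xᶜ = 0 := by
      apply cutRank_zero_of_no_edge A
      intro v hv b hb
      have hbX : b ∈ X := by simpa using hb
      rcases h01 (A b v) with h | h
      · exact h
      · exfalso
        have : A v b = 1 := by rw [← hA.apply]; exact h
        rw [hnoedge b hbX v hv] at this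
        exact zero_ne_one this
    have hXn : X.Nonempty := ⟨u, hu⟩
    have hXcn : Xᶜ.Nonempty := ⟨w, hw⟩
    have hrX : iasRank A (tauSet X) = X.ncard := by
      rw [iasRank_tauSet, hc1, add_zero]
    have hrXc : iasRank A (tauSet X)ᶜ = Xᶜ.ncard := by
      rw [tauSet_compl, iasRank_tauSet, hc2, add_zero]
    have hXpos : 1 ≤ X.ncard := (Set.ncard_pos X.toFinite).2 hXn
    have hXcpos : 1 ≤ Xᶜ.ncard := (Set.ncard_pos Xᶜ.toFinite).2 hXcn
    have hcount : X.ncard + Xᶜ.ncard = Fintype.card V := by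
      rw [Set.ncard_add_ncard_compl, Nat.card_eq_fintype_card]
    have hsep : VerticalSep A 1 (tauSet X) := by
      refine ⟨one_pos, ?_, ?_, ?_⟩
      · rw [iasLambda, hrX, hrXc, iasRank_univ]
        omega
      · rw [hrX]; exact hXpos
      · rw [hrXc]; exact hXcpos
    unfold iasKappa
    have h1mem : (1 : ℕ) ∈ ({k : ℕ | ∃ S, VerticalSep A k S} ∪ {iasRank A Set.univ}) :=
      Or.inl ⟨tauSet X, hsep⟩
    apply le_antisymm (Nat.sInf_le h1mem)
    rw [Nat.one_le_iff_ne_zero]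
    intro h0
    rw [Nat.sInf_eq_zero] at h0
    rcases h0 with (⟨S, hS⟩ | h0) | h0
    · exact absurd hS.1 (lt_irrefl 0)
    · rw [Set.mem_singleton_iff] at h0
      rw [iasRank_univ] at h0
      have := Fintype.card_pos (α := V)
      omega
    · rw [h0] at h1mem
      exact h1mem
  · -- Part 3 : n ≥ 4, connected, split
    rintro ⟨hcard, hconn, X, hX2, hXc2, hcut⟩
    have hXn : X.Nonempty := Set.nonempty_of_ncard_ne_zero (by omega)
    have hXcn : Xᶜ.Nonempty := Set.nonempty_of_ncard_ne_zero (by omega)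
    obtain ⟨v0, hv0⟩ := hXn
    obtain ⟨w0, hw0⟩ := hXcn
    obtain ⟨p⟩ := hconn.preconnected v0 w0
    obtain ⟨a, b, ha, hb, hab⟩ := walk_cross p hv0 hw0
    have hc1 : cutRank A X = 1 := le_antisymm hcut (one_le_cutRank A ha hb hab.2.2)
    have hc2 : cutRank A Xᶜ = 1 := by rw [cutRank_compl_eq A hA]; exact hc1
    have hcount : X.ncard + Xᶜ.ncard = Fintype.card V := by
      rw [Set.ncard_add_ncard_compl, Nat.card_eq_fintype_card]
    have hrX : iasRank A (tauSet X) = X.ncard + 1 := by rw [iasRank_tauSet, hc1]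
    have hrXc : iasRank A (tauSet X)ᶜ = Xᶜ.ncard + 1 := by
      rw [tauSet_compl, iasRank_tauSet, hc2]
    have hsep : VerticalSep A 3 (tauSet X) := by
      refine ⟨by omega, ?_, ?_, ?_⟩
      · rw [iasLambda, hrX, hrXc, iasRank_univ]
        omega
      · rw [hrX]; omega
      · rw [hrXc]; omega
    unfold iasKappa
    apply le_antisymm
    · exact Nat.sInf_le (Or.inl ⟨tauSet X, hsep⟩)
    · apply le_csInf ⟨iasRank A Set.univ, Or.inr rfl⟩
      rintro j (⟨S, hS⟩ | hj)
      · rcases le_or_gt j 2 with h | h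
        · exact absurd hS (no_small_sep A hA hconn h S)
        · omega
      · rw [Set.mem_singleton_iff] at hj
        rw [hj, iasRank_univ]
        omega
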